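/- Let d ≥ 1 and let h₀, h₁, …, h_d be positive real numbers with h_i² ≥ h_{i−1}·h_{i+1} for all 1 ≤ i ≤ d−1 (a positive log-concave sequence), and let f(x) = Σ_{i=0}^{d} h_i · binom(x + d − i, d) ∈ ℝ[x]. Then for every integer m ≥ 2, f(−m)² ≥ f(−m+1)·f(−m−1). (In Ehrhart-theoretic terms: if the h*-polynomial of a lattice polytope P is log-concave, then the sequence |E_P(−1)|, |E_P(−2)|, |E_P(−3)|, … is log-concave.) -/

import Mathlib

/-- The polynomial `binom(x + c, d) = (1/d!) · (x + c)(x + c − 1) ⋯ (x + c − d + 1) ∈ ℝ[x]`.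
For `c = d − i` this is the polynomial `binom(x + d − i, d)`. -/
noncomputable def binomPoly (d : ℕ) (c : ℝ) : Polynomial ℝ :=
  Polynomial.C ((d.factorial : ℝ)⁻¹) *
    ∏ j ∈ Finset.range d, (Polynomial.X + Polynomial.C (c - j))

open Finset

private lemma prod_range_cast_sub (d n : ℕ) :
    ∏ j ∈ Finset.range d, ((n : ℝ) - j) = (n.descFactorial d : ℝ) := by
  induction d with
  | zero => simp
  | succ k ih =>
    rw [Finset.prod_range_succ, ih, Nat.descFactorial_succ]
    rcases le_or_gt k n with hk | hk
    · push_cast [hk]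
      ring
    · rw [Nat.descFactorial_of_lt hk, Nat.sub_eq_zero_of_le (le_of_lt hk)]
      simp

private lemma choose_swap (d x y : ℕ) (hxy : x ≤ y) :
    (x.choose d : ℝ) * ((y + 1).choose d : ℝ) ≤ ((x + 1).choose d : ℝ) * (y.choose d : ℝ) := by
  rcases Nat.lt_or_ge x d with hx | hx
  · rw [Nat.choose_eq_zero_of_lt hx]
    simp
    positivity
  · have hy : d ≤ y := le_trans hx hxy
    have h1 : (x.choose d : ℝ) * ((x : ℝ) + 1) = ((x + 1).choose d : ℝ) * ((x : ℝ) + 1 - d) := by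
      have := Nat.choose_mul_succ_eq x d
      have hc : ((x + 1 - d : ℕ) : ℝ) = (x : ℝ) + 1 - d := by
        push_cast [Nat.le_succ_of_le hx]; ring
      calc (x.choose d : ℝ) * ((x : ℝ) + 1) = ((x.choose d * (x + 1) : ℕ) : ℝ) := by push_cast; ring
        _ = (((x + 1).choose d * (x + 1 - d) : ℕ) : ℝ) := by rw [this]
        _ = ((x + 1).choose d : ℝ) * ((x : ℝ) + 1 - d) := by push_cast [Nat.le_succ_of_le hx]; ring
    have h2 : (y.choose d : ℝ) * ((y : ℝ) + 1) = (((y + 1).choose d : ℝ)) * ((y : ℝ) + 1 - d) := by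
      have := Nat.choose_mul_succ_eq y d
      calc (y.choose d : ℝ) * ((y : ℝ) + 1) = ((y.choose d * (y + 1) : ℕ) : ℝ) := by push_cast; ring
        _ = (((y + 1).choose d * (y + 1 - d) : ℕ) : ℝ) := by rw [this]
        _ = ((y + 1).choose d : ℝ) * ((y : ℝ) + 1 - d) := by push_cast [Nat.le_succ_of_le hy]; ring
    have cpos : (0 : ℝ) < ((x : ℝ) + 1) * ((y : ℝ) + 1 - d) := by
      have : (d : ℝ) ≤ y := by exact_mod_cast hy
      have : (0:ℝ) < (y : ℝ) + 1 - d := by linarith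
      positivity
    refine le_of_mul_le_mul_right ?_ cpos
    have hxy' : (x : ℝ) ≤ y := by exact_mod_cast hxy
    have hA' : (0 : ℝ) ≤ ((x + 1).choose d : ℝ) := by positivity
    have hB : (0 : ℝ) ≤ (y.choose d : ℝ) := by positivity
    have hd' : (0 : ℝ) ≤ (d : ℝ) := by positivity
    calc (x.choose d : ℝ) * ((y + 1).choose d : ℝ) * (((x : ℝ) + 1) * ((y : ℝ) + 1 - d))
        = ((x.choose d : ℝ) * ((x : ℝ) + 1)) * (((y + 1).choose d : ℝ) * ((y : ℝ) + 1 - d)) := by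
          ring
      _ = (((x + 1).choose d : ℝ) * ((x : ℝ) + 1 - d)) * ((y.choose d : ℝ) * ((y : ℝ) + 1)) := by
          rw [h1, ← h2]
      _ ≤ ((x + 1).choose d : ℝ) * (y.choose d : ℝ) * (((x : ℝ) + 1) * ((y : ℝ) + 1 - d)) := by
          nlinarith [mul_nonneg (mul_nonneg hA' hB) (mul_nonneg hd' (sub_nonneg.2 hxy'))]

private lemma h_swap (d : ℕ) (h : ℕ → ℝ) (hpos : ∀ i ≤ d, 0 < h i)
    (hlc : ∀ i : ℕ, 1 ≤ i → i ≤ d - 1 → h (i - 1) * h (i + 1) ≤ h i ^ 2)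
    (p : ℕ) (hp : 1 ≤ p) :
    ∀ q, p ≤ q → q + 1 ≤ d → h (p - 1) * h (q + 1) ≤ h p * h q := by
  intro q hq
  induction q, hq using Nat.le_induction with
  | base =>
    intro hpd
    have := hlc p hp (by omega)
    calc h (p - 1) * h (p + 1) ≤ h p ^ 2 := this
      _ = h p * h p := sq (h p) ▸ by ring
  | succ q hq ih =>
    intro hqd
    have I1 : h (p - 1) * h (q + 1) ≤ h p * h q := ih (by omega)
    have I2 : h q * h (q + 2) ≤ h (q + 1) ^ 2 := by
      have := hlc (q + 1) (by omega) (by omega)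
      simpa using this
    have hp1 : 0 < h p := hpos p (by omega)
    have hq1 : 0 < h (q + 1) := hpos (q + 1) (by omega)
    have hq2 : 0 < h (q + 2) := hpos (q + 2) (by omega)
    have hpm : 0 < h (p - 1) := hpos (p - 1) (by omega)
    have hq0 : 0 < h q := hpos q (by omega)
    have hA : h (p - 1) * h (q + 1) * h (q + 2) ≤ h p * (h q * h (q + 2)) := by
      nlinarith [mul_le_mul_of_nonneg_right I1 hq2.le]
    have hB : h p * (h q * h (q + 2)) ≤ h p * h (q + 1) ^ 2 := by
      nlinarith [mul_le_mul_of_nonneg_left I2 hp1.le]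
    show h (p - 1) * h (q + 1 + 1) ≤ h p * h (q + 1)
    nlinarith [hA, hB, hq1]

private lemma core (d : ℕ) (hd : 1 ≤ d) (h : ℕ → ℝ) (hpos : ∀ i ≤ d, 0 < h i)
    (hlc : ∀ i : ℕ, 1 ≤ i → i ≤ d - 1 → h (i - 1) * h (i + 1) ≤ h i ^ 2) (M : ℕ) :
    (∑ i ∈ Finset.range (d + 1), h i * ((M + i).choose d : ℝ)) *
      (∑ i ∈ Finset.range (d + 1), h i * ((M + i + 2).choose d : ℝ)) ≤
    (∑ i ∈ Finset.range (d + 1), h i * ((M + i + 1).choose d : ℝ)) ^ 2 := by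
  set H : ℕ → ℝ := fun i => if 2 ≤ i ∧ i ≤ d + 2 then h (i - 2) else 0 with hH
  set b : ℕ → ℝ := fun k => ((M + k).choose d : ℝ) with hb
  have Hvan : ∀ k, ¬(2 ≤ k ∧ k ≤ d + 2) → H k = 0 := fun k hk => if_neg hk
  have Hnn : ∀ k, 0 ≤ H k := by
    intro k
    rw [hH]
    dsimp only
    split
    · exact (hpos _ (by omega)).le
    · exact le_refl 0
  have bnn : ∀ k, 0 ≤ b k := by
    intro k; rw [hb]; positivity
  have bswap : ∀ x y, x ≤ y → b x * b (y + 1) ≤ b (x + 1) * b y := by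
    intro x y hxy
    have := choose_swap d (M + x) (M + y) (by omega)
    simpa [hb, ← Nat.add_assoc] using this
  have Hlem : ∀ p q, 1 ≤ p → p ≤ q → H (p - 1) * H (q + 1) ≤ H p * H q := by
    intro p q hp hpq
    by_cases h1 : 2 ≤ p - 1 ∧ p - 1 ≤ d + 2
    · by_cases h2 : 2 ≤ q + 1 ∧ q + 1 ≤ d + 2
      · have e1 : H (p - 1) = h (p - 3) := by
          rw [hH]; dsimp only; rw [if_pos h1]; congr 1
        have e2 : H (q + 1) = h (q - 1) := by
          rw [hH]; dsimp only; rw [if_pos h2]; congr 1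
        have e3 : H p = h (p - 2) := by
          rw [hH]; dsimp only; rw [if_pos (by omega)]
        have e4 : H q = h (q - 2) := by
          rw [hH]; dsimp only; rw [if_pos (by omega)]
        rw [e1, e2, e3, e4]
        have := h_swap d h hpos hlc (p - 2) (by omega) (q - 2) (by omega) (by omega)
        rw [show p - 2 - 1 = p - 3 by omega, show q - 2 + 1 = q - 1 by omega] at this
        exact this
      · rw [Hvan _ h2, mul_zero]
        exact mul_nonneg (Hnn p) (Hnn q)
    · rw [Hvan _ h1, zero_mul]
      exact mul_nonneg (Hnn p) (Hnn q)
  set T : ℕ → ℕ → ℝ := fun i j => H i * H j * (b (i - 1) * b (j - 1) - b (i - 2) * b j)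
    with hT
  set X := Finset.Icc 1 (d + 3) with hX
  set Y := Finset.range (d + 3) with hY
  have subX : Finset.Icc 2 (d + 2) ⊆ X := by
    intro a ha
    rw [hX, Finset.mem_Icc]
    rw [Finset.mem_Icc] at ha
    omega
  have subY : Finset.Icc 2 (d + 2) ⊆ Y := by
    intro a ha
    rw [hY, Finset.mem_range]
    rw [Finset.mem_Icc] at ha
    omega
  -- shrink a sum to the support interval
  have shrink : ∀ (s : Finset ℕ), Finset.Icc 2 (d + 2) ⊆ s → ∀ G : ℕ → ℝ,
      (∀ j, ¬(2 ≤ j ∧ j ≤ d + 2) → G j = 0) →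
      ∑ j ∈ s, G j = ∑ j ∈ Finset.Icc 2 (d + 2), G j := by
    intro s hs G hG
    refine (Finset.sum_subset hs fun x _ hx => ?_).symm
    exact hG x (by simpa [Finset.mem_Icc] using hx)
  -- convert X-sums to range-sums
  have convX : ∀ F : ℕ → ℝ, ∑ i ∈ X, H i * F i = ∑ a ∈ Finset.range (d + 1), h a * F (a + 2) := by
    intro F
    rw [shrink X subX _ (fun j hj => by rw [Hvan j hj, zero_mul])]
    refine Finset.sum_nbij' (fun a => a - 2) (fun a => a + 2) ?_ ?_ ?_ ?_ ?_
    · intro a ha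
      rw [Finset.mem_Icc] at ha
      simp only [Finset.mem_range]
      omega
    · intro a ha
      rw [Finset.mem_range] at ha
      simp only [Finset.mem_Icc]
      omega
    · intro a ha
      rw [Finset.mem_Icc] at ha
      omega
    · intro a _
      omega
    · intro a ha
      rw [Finset.mem_Icc] at ha
      have e : a - 2 + 2 = a := by omega
      have eH : H a = h (a - 2) := by
        rw [hH]; dsimp only; rw [if_pos (by omega)]
      rw [eH, e]
  have ea : ∑ i ∈ X, H i * b (i - 2)
      = ∑ i ∈ Finset.range (d + 1), h i * ((M + i).choose d : ℝ) := convX (fun i => b (i - 2))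
  have eb : ∑ i ∈ X, H i * b (i - 1)
      = ∑ i ∈ Finset.range (d + 1), h i * ((M + i + 1).choose d : ℝ) := convX (fun i => b (i - 1))
  have ec : ∑ i ∈ X, H i * b i
      = ∑ i ∈ Finset.range (d + 1), h i * ((M + i + 2).choose d : ℝ) := convX b
  have expand2 : (∑ i ∈ X, H i * b (i - 1)) ^ 2
      - (∑ i ∈ X, H i * b (i - 2)) * (∑ i ∈ X, H i * b i)
      = ∑ i ∈ X, ∑ j ∈ Y, T i j := by
    rw [sq, Finset.sum_mul_sum, Finset.sum_mul_sum, ← Finset.sum_sub_distrib]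
    refine Finset.sum_congr rfl fun i hi => ?_
    rw [← Finset.sum_sub_distrib]
    rw [shrink X subX _ (fun j hj => by rw [Hvan j hj]; ring),
      shrink Y subY _ (fun j hj => by rw [hT]; dsimp only; rw [Hvan j hj]; ring)]
    refine Finset.sum_congr rfl fun j _ => ?_
    rw [hT]; dsimp only; ring
  have flip : ∑ i ∈ X, ∑ j ∈ Y, T i j = ∑ i ∈ X, ∑ j ∈ Y, T (j + 1) (i - 1) := by
    rw [← Finset.sum_product' X Y (fun i j => T i j),
      ← Finset.sum_product' X Y (fun i j => T (j + 1) (i - 1))]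
    refine Finset.sum_nbij' (fun p => (p.2 + 1, p.1 - 1)) (fun p => (p.2 + 1, p.1 - 1))
      ?_ ?_ ?_ ?_ ?_
    · intro p hp
      simp only [hX, hY, Finset.mem_product, Finset.mem_Icc, Finset.mem_range] at hp ⊢
      omega
    · intro p hp
      simp only [hX, hY, Finset.mem_product, Finset.mem_Icc, Finset.mem_range] at hp ⊢
      omega
    · intro p hp
      simp only [hX, hY, Finset.mem_product, Finset.mem_Icc, Finset.mem_range] at hp
      have : p.1 - 1 + 1 = p.1 := by omega
      simp only [this, Nat.add_sub_cancel]
    · intro p hp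
      simp only [hX, hY, Finset.mem_product, Finset.mem_Icc, Finset.mem_range] at hp
      have : p.1 - 1 + 1 = p.1 := by omega
      simp only [this, Nat.add_sub_cancel]
    · intro p hp
      simp only [hX, hY, Finset.mem_product, Finset.mem_Icc, Finset.mem_range] at hp
      have e : p.1 - 1 + 1 = p.1 := by omega
      simp only [e, Nat.add_sub_cancel]
  have term : ∀ i ∈ X, ∀ j ∈ Y, 0 ≤ T i j + T (j + 1) (i - 1) := by
    intro i hi j hj
    simp only [hX, Finset.mem_Icc] at hi
    simp only [hY, Finset.mem_range] at hj
    have expand : T i j + T (j + 1) (i - 1)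
        = (H i * H j - H (i - 1) * H (j + 1)) * (b (i - 1) * b (j - 1) - b (i - 2) * b j) := by
      have e1 : j + 1 - 2 = j - 1 := by omega
      have e2 : i - 1 - 1 = i - 2 := by omega
      rw [hT]; dsimp only
      rw [e1, e2, Nat.add_sub_cancel]
      ring
    rw [expand]
    by_cases hdeg : i ≤ 1 ∨ j = 0
    · have F1 : H i * H j - H (i - 1) * H (j + 1) = 0 := by
        rcases hdeg with hi' | hj'
        · have hi1 : i = 1 := by omega
          rw [hi1, show (1:ℕ) - 1 = 0 from rfl, Hvan 1 (by omega), Hvan 0 (by omega)]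
          ring
        · rw [hj', Hvan 0 (by omega), show (0:ℕ) + 1 = 1 from rfl, Hvan 1 (by omega)]
          ring
      rw [F1, zero_mul]
    · push_neg at hdeg
      obtain ⟨hi2, hj1⟩ := hdeg
      have hi2' : 2 ≤ i := by omega
      have hj1' : 1 ≤ j := by omega
      rcases lt_trichotomy i (j + 1) with hlt | heq | hgt
      · have hij : i ≤ j := by omega
        have F1 : H (i - 1) * H (j + 1) ≤ H i * H j := Hlem i j (by omega) hij
        have F2 : b (i - 2) * b j ≤ b (i - 1) * b (j - 1) := by
          have := bswap (i - 2) (j - 1) (by omega)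
          rw [show j - 1 + 1 = j by omega, show i - 2 + 1 = i - 1 by omega] at this
          exact this
        exact mul_nonneg (by linarith) (by linarith)
      · have F1 : H i * H j - H (i - 1) * H (j + 1) = 0 := by
          rw [show i - 1 = j by omega, show j + 1 = i by omega]
          ring
        rw [F1, zero_mul]
      · have F1 : H j * H i ≤ H (j + 1) * H (i - 1) := by
          have := Hlem (j + 1) (i - 1) (by omega) (by omega)
          rw [show j + 1 - 1 = j by omega, show i - 1 + 1 = i by omega] at this
          exact this
        have F2 : b (j - 1) * b (i - 1) ≤ b j * b (i - 2) := by
          have := bswap (j - 1) (i - 2) (by omega)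
          rw [show j - 1 + 1 = j by omega, show i - 2 + 1 = i - 1 by omega] at this
          exact this
        have g1 : H i * H j - H (i - 1) * H (j + 1) ≤ 0 := by
          nlinarith [F1]
        have g2 : b (i - 1) * b (j - 1) - b (i - 2) * b j ≤ 0 := by
          nlinarith [F2]
        have := mul_nonneg (neg_nonneg.2 g1) (neg_nonneg.2 g2)
        rw [neg_mul_neg] at this
        exact this
  have nonneg : 0 ≤ ∑ i ∈ X, ∑ j ∈ Y, T i j := by
    have h2 : 0 ≤ (∑ i ∈ X, ∑ j ∈ Y, T i j) + ∑ i ∈ X, ∑ j ∈ Y, T (j + 1) (i - 1) := by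
      rw [← Finset.sum_add_distrib]
      refine Finset.sum_nonneg fun i hi => ?_
      rw [← Finset.sum_add_distrib]
      exact Finset.sum_nonneg fun j hj => term i hi j hj
    rw [← flip] at h2
    linarith
  rw [← ea, ← eb, ← ec]
  linarith [expand2, nonneg]

private lemma eval_formula (d : ℕ) (h : ℕ → ℝ) (f : Polynomial ℝ)
    (hf : f = ∑ i ∈ Finset.range (d + 1), Polynomial.C (h i) * binomPoly d ((d : ℝ) - i))
    (M k : ℕ) :
    f.eval (-((M : ℝ) + k + 1)) =
      (-1 : ℝ) ^ d * ∑ i ∈ Finset.range (d + 1), h i * ((M + k + i).choose d : ℝ) := by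
  rw [hf, Polynomial.eval_finset_sum, Finset.mul_sum]
  refine Finset.sum_congr rfl fun i hi => ?_
  rw [Finset.mem_range] at hi
  rw [Polynomial.eval_mul, Polynomial.eval_C, binomPoly, Polynomial.eval_mul,
    Polynomial.eval_C, Polynomial.eval_prod]
  simp only [Polynomial.eval_add, Polynomial.eval_X, Polynomial.eval_C]
  have key : ∏ j ∈ Finset.range d, (-((M : ℝ) + k + 1) + ((d : ℝ) - i - j))
      = (-1 : ℝ) ^ d * ((M + k + i).descFactorial d : ℝ) := by
    calc ∏ j ∈ Finset.range d, (-((M : ℝ) + k + 1) + ((d : ℝ) - i - j))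
        = ∏ j ∈ Finset.range d,
            (fun j' : ℕ => (-1 : ℝ) * (((M + k + i : ℕ) : ℝ) - j')) (d - 1 - j) := by
          refine Finset.prod_congr rfl fun j hj => ?_
          rw [Finset.mem_range] at hj
          have hc : ((d - 1 - j : ℕ) : ℝ) = (d : ℝ) - 1 - j := by
            have h1 : j ≤ d - 1 := by omega
            have h2 : 1 ≤ d := by omega
            push_cast [h1, h2]
            ring
          dsimp only
          rw [hc]
          push_cast
          ring
      _ = ∏ j ∈ Finset.range d, (-1 : ℝ) * (((M + k + i : ℕ) : ℝ) - j) :=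
          by exact Finset.prod_range_reflect (fun j' : ℕ => (-1 : ℝ) * (((M + k + i : ℕ) : ℝ) - j')) d
      _ = (-1 : ℝ) ^ d * ∏ j ∈ Finset.range d, (((M + k + i : ℕ) : ℝ) - j) := by
          rw [Finset.prod_mul_distrib, Finset.prod_const, Finset.card_range]
      _ = (-1 : ℝ) ^ d * ((M + k + i).descFactorial d : ℝ) := by
          rw [prod_range_cast_sub]
  rw [key, Nat.descFactorial_eq_factorial_mul_choose]
  have hne : (d.factorial : ℝ) ≠ 0 := by positivity
  push_cast
  field_simp


/-- Let `h₀, …, h_d` (`d ≥ 1`) be a positive log-concave sequence and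
`f(x) = Σ_{i=0}^{d} h_i·binom(x + d − i, d)`.  Then for every integer `m ≥ 2`,
`f(−m)² ≥ f(−m+1)·f(−m−1)`.  (If the `h*`-polynomial of a lattice polytope is
log-concave, then `|E_P(−1)|, |E_P(−2)|, …` is log-concave.) -/
theorem hstar_log_concave_implies_negative_evaluations_log_concave
    (d : ℕ) (hd : 1 ≤ d) (h : ℕ → ℝ)
    (hpos : ∀ i ≤ d, 0 < h i)
    (hlc : ∀ i : ℕ, 1 ≤ i → i ≤ d - 1 → h (i - 1) * h (i + 1) ≤ h i ^ 2)
    (f : Polynomial ℝ)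
    (hf : f = ∑ i ∈ Finset.range (d + 1), Polynomial.C (h i) * binomPoly d ((d : ℝ) - i)) :
    ∀ m : ℤ, 2 ≤ m →
      f.eval (-(m : ℝ) + 1) * f.eval (-(m : ℝ) - 1) ≤ f.eval (-(m : ℝ)) ^ 2 := by
  intro m hm
  set M : ℕ := (m - 2).toNat with hM
  have hMc : (M : ℝ) = (m : ℝ) - 2 := by
    have h1 : ((m - 2).toNat : ℤ) = m - 2 := Int.toNat_of_nonneg (by omega)
    rw [hM]
    exact_mod_cast congrArg (fun z : ℤ => (z : ℝ)) h1
  have E1 : f.eval (-(m : ℝ) + 1)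
      = (-1 : ℝ) ^ d * ∑ i ∈ Finset.range (d + 1), h i * ((M + 0 + i).choose d : ℝ) := by
    rw [show -(m : ℝ) + 1 = -((M : ℝ) + 0 + 1) by rw [hMc]; ring]
    have := eval_formula d h f hf M 0
    norm_num at this ⊢
    convert this using 3
  have E2 : f.eval (-(m : ℝ))
      = (-1 : ℝ) ^ d * ∑ i ∈ Finset.range (d + 1), h i * ((M + 1 + i).choose d : ℝ) := by
    rw [show -(m : ℝ) = -((M : ℝ) + 1 + 1) by rw [hMc]; ring]
    have := eval_formula d h f hf M 1
    norm_num at this ⊢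
    convert this using 3
  have E3 : f.eval (-(m : ℝ) - 1)
      = (-1 : ℝ) ^ d * ∑ i ∈ Finset.range (d + 1), h i * ((M + 2 + i).choose d : ℝ) := by
    rw [show -(m : ℝ) - 1 = -((M : ℝ) + 2 + 1) by rw [hMc]; ring]
    have := eval_formula d h f hf M 2
    norm_num at this ⊢
    convert this using 3
  have r1 : ∀ i : ℕ, M + 0 + i = M + i := fun i => by omega
  have r2 : ∀ i : ℕ, M + 1 + i = M + i + 1 := fun i => by omega
  have r3 : ∀ i : ℕ, M + 2 + i = M + i + 2 := fun i => by omega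
  simp only [r1] at E1
  simp only [r2] at E2
  simp only [r3] at E3
  rw [E1, E2, E3]
  have hcore := core d hd h hpos hlc M
  have hsq : ((-1 : ℝ) ^ d) ^ 2 = 1 := by
    rw [← pow_mul, mul_comm, pow_mul, neg_one_sq, one_pow]
  set A := ∑ i ∈ Finset.range (d + 1), h i * ((M + i).choose d : ℝ) with hA
  set B := ∑ i ∈ Finset.range (d + 1), h i * ((M + i + 1).choose d : ℝ) with hB
  set C := ∑ i ∈ Finset.range (d + 1), h i * ((M + i + 2).choose d : ℝ) with hC
  have e1 : ((-1 : ℝ) ^ d * A) * ((-1 : ℝ) ^ d * C) = A * C := by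
    linear_combination (A * C) * hsq
  have e2 : ((-1 : ℝ) ^ d * B) ^ 2 = B ^ 2 := by
    linear_combination (B ^ 2) * hsq
  rw [e1, e2]
  exact hcore
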